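/- For every d ∈ ℕ, the (d+1)-dimensional vector space with basis ξ_0, …, ξ_d becomes a U-module (the module Λ_d^-) under F·ξ_r = t^r [r+1]_v ξ_{r+1}, E·ξ_r = −t^{r-1} [d+1-r]_v ξ_{r-1}, K·ξ_r = −t^{2r} v^{d-2r} ξ_r (with ξ_{-1} = ξ_{d+1} = 0); i.e., these operators satisfy the defining relations of U. -/

import Mathlib

noncomputable section

/-- The quantum integer `[n]_v`. -/
def qint {F : Type*} [Field F] (v : F) (n : ℕ) : F := (v ^ n - v⁻¹ ^ n) / (v - v⁻¹)

/-- The matrix of `E` on `Λ_d^-`: `E·ξ_r = −t^(r-1) [d+1-r]_v ξ_(r-1)` (with `ξ_(-1) = 0`). -/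
def Ematm {F : Type*} [Field F] (v t : F) (d : ℕ) :
    Matrix (Fin (d + 1)) (Fin (d + 1)) F :=
  fun s r => if (r : ℕ) = (s : ℕ) + 1 then -(t ^ (s : ℕ) * qint v (d - (s : ℕ))) else 0

/-- The matrix of `F` on `Λ_d^-`: `F·ξ_r = t^r [r+1]_v ξ_(r+1)` (with `ξ_(d+1) = 0`). -/
def Fmatm {F : Type*} [Field F] (v t : F) (d : ℕ) :
    Matrix (Fin (d + 1)) (Fin (d + 1)) F :=
  fun s r => if (s : ℕ) = (r : ℕ) + 1 then t ^ (r : ℕ) * qint v ((r : ℕ) + 1) else 0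

/-- The matrix of `K` on `Λ_d^-`: `K·ξ_r = −t^(2r) v^(d-2r) ξ_r`. -/
def Kmatm {F : Type*} [Field F] (v t : F) (d : ℕ) :
    Matrix (Fin (d + 1)) (Fin (d + 1)) F :=
  Matrix.diagonal fun r => -(t ^ (2 * (r : ℕ)) * v ^ ((d : ℤ) - 2 * (r : ℕ)))

/-- The matrix of `K⁻¹` on `Λ_d^-`. -/
def Kinvmatm {F : Type*} [Field F] (v t : F) (d : ℕ) :
    Matrix (Fin (d + 1)) (Fin (d + 1)) F :=
  Matrix.diagonal fun r => (-(t ^ (2 * (r : ℕ)) * v ^ ((d : ℤ) - 2 * (r : ℕ))))⁻¹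

lemma qint_zero {F : Type*} [Field F] (v : F) : qint v 0 = 0 := by simp [qint]

lemma qint_one {F : Type*} [Field F] {v : F} (hu : v - v⁻¹ ≠ 0) : qint v 1 = 1 := by
  rw [qint, pow_one, pow_one, div_self hu]

lemma sum_fin_ite {F : Type*} [AddCommMonoid F] {d : ℕ} (f : Fin (d+1) → F) (n : ℕ) :
    (∑ k : Fin (d+1), if (k : ℕ) = n then f k else 0)
      = if h : n < d + 1 then f ⟨n, h⟩ else 0 := by
  split_ifs with h
  · rw [Finset.sum_eq_single (⟨n, h⟩ : Fin (d+1))]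
    · simp
    · intro k _ hk
      rw [if_neg]
      simpa [Fin.ext_iff] using hk
    · simp
  · apply Finset.sum_eq_zero
    intro k _
    rw [if_neg]
    omega

lemma EF_eq {F : Type*} [Field F] (v t : F) (d : ℕ) :
    Ematm v t d * Fmatm v t d =
      Matrix.diagonal (fun i : Fin (d+1) =>
        -(t ^ (2 * (i : ℕ)) * (qint v (d - (i : ℕ)) * qint v ((i : ℕ) + 1)))) := by
  ext i j
  rw [Matrix.mul_apply]
  simp only [Ematm, Fmatm, ite_mul, zero_mul, mul_ite, mul_zero]
  rw [sum_fin_ite (fun k => if (k:ℕ) = (i:ℕ)+1 then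
    -(t ^ (i : ℕ) * qint v (d - (i : ℕ))) * (t ^ (j : ℕ) * qint v ((j : ℕ) + 1)) else 0)
    ((j:ℕ)+1)]
  rw [Matrix.diagonal_apply]
  by_cases hd : (j:ℕ) + 1 < d + 1
  · rw [dif_pos hd]
    simp only
    by_cases hij : (j:ℕ) + 1 = (i:ℕ) + 1
    · rw [if_pos hij, if_pos (Fin.ext (by omega) : i = j)]
      have : (j:ℕ) = (i:ℕ) := by omega
      rw [this]
      ring_nf
    · rw [if_neg hij, if_neg (fun h => hij (by rw [h]))]
  · rw [dif_neg hd]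
    have hj : (j:ℕ) = d := by omega
    split_ifs with h
    · have : (i:ℕ) = d := by rw [h, hj]
      rw [this, Nat.sub_self, qint_zero]
      ring
    · rfl

lemma FE_eq {F : Type*} [Field F] (v t : F) (d : ℕ) :
    Fmatm v t d * Ematm v t d =
      Matrix.diagonal (fun i : Fin (d+1) =>
        -(t ^ (2 * ((i : ℕ) - 1)) * (qint v (i : ℕ) * qint v (d - ((i : ℕ) - 1))))) := by
  ext i j
  rw [Matrix.mul_apply]
  simp only [Fmatm, Ematm, ite_mul, zero_mul, mul_ite, mul_zero]
  rw [Matrix.diagonal_apply]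
  by_cases hj0 : (j:ℕ) = 0
  · rw [Finset.sum_eq_zero (fun k _ => if_neg (by omega))]
    split_ifs with h
    · rw [h, hj0]
      simp [qint_zero]
    · rfl
  · have hc : ∀ x : Fin (d+1), ((j:ℕ) = (x:ℕ)+1) = ((x:ℕ) = (j:ℕ)-1) :=
      fun x => propext (by omega)
    simp only [hc]
    rw [sum_fin_ite (fun x => if (i:ℕ) = (x:ℕ)+1 then
      t^(x:ℕ) * qint v ((x:ℕ)+1) * -(t^(x:ℕ) * qint v (d - (x:ℕ))) else 0) ((j:ℕ)-1)]
    rw [dif_pos (by omega : (j:ℕ)-1 < d+1)]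
    simp only
    have hj1 : (j:ℕ)-1+1 = (j:ℕ) := by omega
    rw [hj1]
    split_ifs with h1 h2 h2
    · rw [h2]
      ring
    · exact absurd (Fin.ext h1) h2
    · exact absurd (congrArg Fin.val h2) h1
    · rfl

lemma qcore {F : Type*} [Field F] {v : F} (hv : v ≠ 0) (hu : v - v⁻¹ ≠ 0) (m k : ℕ) :
    qint v k * qint v (m+2) - qint v (m+1) * qint v (k+1)
      = (v - v⁻¹)⁻¹ * (v ^ ((k:ℤ) - (m:ℤ) - 1) - v ^ ((m:ℤ) + 1 - (k:ℤ))) := by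
  have e1 : v ^ ((k:ℤ) - (m:ℤ) - 1) = v ^ k / (v ^ m * v) := by
    rw [show (k:ℤ) - (m:ℤ) - 1 = (k:ℤ) - (((m:ℤ)) + 1) by ring, zpow_sub₀ hv]
    norm_cast
    rw [pow_succ]
  have e2 : v ^ ((m:ℤ) + 1 - (k:ℤ)) = (v ^ m * v) / v ^ k := by
    rw [zpow_sub₀ hv]
    norm_cast
    rw [pow_succ]
  rw [e1, e2, qint, qint, qint, qint, div_mul_div_comm, div_mul_div_comm,
    div_sub_div_same,
    show (v^k - v⁻¹^k)*(v^(m+2) - v⁻¹^(m+2)) - (v^(m+1)-v⁻¹^(m+1))*(v^(k+1)-v⁻¹^(k+1))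
      = (v - v⁻¹)*(v^k * v⁻¹^(m+1) - v^(m+1) * v⁻¹^k) from by ring,
    show v ^ k * v⁻¹^(m+1) - v^(m+1) * v⁻¹^k = v^k/(v^m*v) - v^m*v/v^k from by
      rw [inv_pow, inv_pow, pow_succ, div_eq_mul_inv, div_eq_mul_inv],
    mul_div_mul_left _ _ hu, div_eq_mul_inv, mul_comm]

lemma diag_scalar {F : Type*} [Field F] (v t : F) (ht : t ^ 2 = -1) (hv : v ≠ 0)
    (hu : v - v⁻¹ ≠ 0) (d n : ℕ) (hn : n ≤ d) :
    -(t ^ (2*n) * (qint v (d - n) * qint v (n+1)))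
      - t^2 * (-(t ^ (2*(n-1)) * (qint v n * qint v (d - (n-1)))))
    = (v - v⁻¹)⁻¹ * (-(t ^ (2*n) * v ^ ((d:ℤ) - 2*n))
        - (-(t ^ (2*n) * v ^ ((d:ℤ) - 2*n)))⁻¹) := by
  have hneg : ∀ j : ℕ, t ^ (2*j) = ((-1 : F)) ^ j := fun j => by rw [pow_mul, ht]
  have hKinv : (-(t ^ (2*n) * v ^ ((d:ℤ) - 2*n)))⁻¹
      = -(((-1:F))^n * v ^ (2*(n:ℤ) - (d:ℤ))) := by
    rw [hneg, inv_neg, mul_inv, ← inv_pow, inv_neg, inv_one, ← zpow_neg,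
      show -((d:ℤ) - 2*n) = 2*(n:ℤ) - (d:ℤ) by ring]
  rw [hKinv, hneg, hneg, ht]
  cases n with
  | zero =>
      simp only [Nat.sub_zero, Nat.zero_sub, pow_zero, one_mul, Nat.cast_zero,
        mul_zero, sub_zero, zero_sub, zero_add, qint_zero, zero_mul, neg_zero,
        qint_one hu, mul_one]
      rw [qint, zpow_neg, zpow_natCast, ← inv_pow, div_eq_mul_inv]
      ring
  | succ m =>
      have hk : d - (m+1) + (m+1) = d := Nat.sub_add_cancel hn
      set k := d - (m+1) with hkdef
      have h1 : (m+1) - 1 = m := by omega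
      have h2 : d - m = k + 1 := by omega
      have h3 : (d:ℤ) - 2*((m+1:ℕ):ℤ) = (k:ℤ) - (m:ℤ) - 1 := by
        push_cast [← hk]; ring
      have h4 : 2*((m+1:ℕ):ℤ) - (d:ℤ) = (m:ℤ) + 1 - (k:ℤ) := by
        push_cast [← hk]; ring
      rw [h1, h2, h3, h4]
      have hc := qcore hv hu m k
      linear_combination ((-1:F)^m) * hc

theorem Lambda_minus_is_U_module {F : Type*} [Field F] (v t : F)
    (ht : t ^ 2 = -1) (hv : v ≠ 0) (d : ℕ) :
    Kmatm v t d * Kinvmatm v t d = 1 ∧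
    Kinvmatm v t d * Kmatm v t d = 1 ∧
    Kmatm v t d * Ematm v t d = (v ^ 2 / t ^ 2) • (Ematm v t d * Kmatm v t d) ∧
    Kmatm v t d * Fmatm v t d = (t ^ 2 / v ^ 2) • (Fmatm v t d * Kmatm v t d) ∧
    Ematm v t d * Fmatm v t d - t ^ 2 • (Fmatm v t d * Ematm v t d)
      = (v - v⁻¹)⁻¹ • (Kmatm v t d - Kinvmatm v t d) := by
  have ht0 : t ≠ 0 := by
    intro h; rw [h] at ht; simp at ht
  have hA : ∀ r : Fin (d+1), (-(t ^ (2 * (r : ℕ)) * v ^ ((d : ℤ) - 2 * (r : ℕ)))) ≠ 0 := by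
    intro r
    exact neg_ne_zero.mpr (mul_ne_zero (pow_ne_zero _ ht0) (zpow_ne_zero _ hv))
  refine ⟨?_, ?_, ?_, ?_, ?_⟩
  · rw [Kmatm, Kinvmatm, Matrix.diagonal_mul_diagonal,
      show (fun r : Fin (d+1) => (-(t ^ (2 * (r : ℕ)) * v ^ ((d : ℤ) - 2 * (r : ℕ)))) *
        (-(t ^ (2 * (r : ℕ)) * v ^ ((d : ℤ) - 2 * (r : ℕ))))⁻¹) = fun _ => (1:F) from
        funext fun r => mul_inv_cancel₀ (hA r), Matrix.diagonal_one]
  · rw [Kmatm, Kinvmatm, Matrix.diagonal_mul_diagonal,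
      show (fun r : Fin (d+1) => (-(t ^ (2 * (r : ℕ)) * v ^ ((d : ℤ) - 2 * (r : ℕ))))⁻¹ *
        (-(t ^ (2 * (r : ℕ)) * v ^ ((d : ℤ) - 2 * (r : ℕ))))) = fun _ => (1:F) from
        funext fun r => inv_mul_cancel₀ (hA r), Matrix.diagonal_one]
  · ext s r
    rw [Kmatm, Matrix.smul_apply, Matrix.diagonal_mul, Matrix.mul_diagonal, Ematm]
    by_cases h : (r : ℕ) = (s : ℕ) + 1
    · rw [if_pos h]
      rw [h]
      have hz : v ^ ((d : ℤ) - 2 * (((s:ℕ):ℤ) + 1)) = v ^ ((d : ℤ) - 2 * (s:ℕ)) / v ^ 2 := by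
        rw [show (d : ℤ) - 2 * (((s:ℕ):ℤ) + 1) = ((d : ℤ) - 2 * (s:ℕ)) - 2 by ring,
          zpow_sub₀ hv]
        norm_cast
      push_cast [hz, pow_succ, pow_mul]
      have hv2 : v ^ 2 ≠ 0 := pow_ne_zero _ hv
      have ht2 : t ^ 2 ≠ 0 := pow_ne_zero _ ht0
      field_simp
      ring_nf
      field_simp
    · rw [if_neg h]
      simp
  · ext s r
    rw [Kmatm, Matrix.smul_apply, Matrix.diagonal_mul, Matrix.mul_diagonal, Fmatm]
    by_cases h : (s : ℕ) = (r : ℕ) + 1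
    · rw [if_pos h]
      rw [h]
      have hz : v ^ ((d : ℤ) - 2 * (((r:ℕ):ℤ) + 1)) = v ^ ((d : ℤ) - 2 * (r:ℕ)) / v ^ 2 := by
        rw [show (d : ℤ) - 2 * (((r:ℕ):ℤ) + 1) = ((d : ℤ) - 2 * (r:ℕ)) - 2 by ring,
          zpow_sub₀ hv]
        norm_cast
      push_cast [hz, pow_succ, pow_mul]
      have hv2 : v ^ 2 ≠ 0 := pow_ne_zero _ hv
      have ht2 : t ^ 2 ≠ 0 := pow_ne_zero _ ht0
      field_simp
      ring_nf
      field_simp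
    · rw [if_neg h]
      simp
  · rw [EF_eq, FE_eq, Kmatm, Kinvmatm]
    ext i j
    simp only [Matrix.sub_apply, Matrix.smul_apply, Matrix.diagonal_apply, smul_eq_mul]
    by_cases hij : i = j
    · rw [if_pos hij, if_pos hij, if_pos hij, if_pos hij]
      by_cases hu : v - v⁻¹ = 0
      · simp [qint, hu]
      · exact diag_scalar v t ht hv hu d (i:ℕ) (by omega)
    · rw [if_neg hij, if_neg hij, if_neg hij, if_neg hij]
      simp
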